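/- Fix λ > 0, s ∈ ℝ^{p(n−1)}, C ∈ ℝ^{pm×pm}, E_{[1,p]} ∈ ℝ^{p(n−1)×pm}, b₀ ∈ ℝ^{pm}, x ∈ ℝ^{pm}, and v ∈ ℝ^{p(n−1)}. Let ψ : ℝ^{pm} → ℝ be differentiable at x. Suppose X : ℝ^{pm} → ℝ^{pm} and V : ℝ^{pm} → ℝ^{p(n−1)} are differentiable at b₀, satisfy X(b₀) = x and V(b₀) = v, and for all b in a neighborhood of b₀ satisfy s = E_{[1,p]}X(b) and X(b) = exp((1/λ)(E_{[1,p]}ᵀV(b) − b − C·X(b)) − 1_{pm}) (exp componentwise). Let D = diag(x) and let J be the block matrix [[I_{pm} + (1/λ)DC, −(1/λ)DE_{[1,p]}ᵀ], [−E_{[1,p]}, 0]]. If J is nonsingular, then the gradient at b₀ of the map b ↦ ψ(X(b)) equals −(1/λ)·[Dᵀ 0]·J^{−ᵀ}·[∇ψ(x); 0], where [∇ψ(x); 0] ∈ ℝ^{pm + p(n−1)} stacks ∇ψ(x) over the zero vector. -/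

import Mathlib

open Matrix

set_option maxHeartbeats 1000000 in
/-- Theorem 2, gradient with respect to `b`: if `(X(b), V(b))`
solves the softmax equilibrium equations near `b₀`, with `X(b₀) = x`,
`V(b₀) = v`, `D = diag(x)`, and the block Jacobian
`J = [[I + (1/λ)DC, −(1/λ)DEᵀ], [−E, 0]]` nonsingular, then the gradient of
`b ↦ ψ(X(b))` at `b₀` is `−(1/λ)·[Dᵀ 0]·J^{−ᵀ}·[∇ψ(x); 0]`. Gradients are
expressed componentwise via directional derivatives along `Pi.single k 1`. -/
theorem stmt14 (n m p : ℕ) (hn : 0 < n) (hm : 0 < m) (hp : 0 < p)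
    (lam : ℝ) (hlam : 0 < lam)
    (s : Fin (p * (n - 1)) → ℝ)
    (C : Matrix (Fin (p * m)) (Fin (p * m)) ℝ)
    (E : Matrix (Fin (p * (n - 1))) (Fin (p * m)) ℝ)
    (b₀ x : Fin (p * m) → ℝ) (v : Fin (p * (n - 1)) → ℝ)
    (ψ : (Fin (p * m) → ℝ) → ℝ) (hψ : DifferentiableAt ℝ ψ x)
    (X : (Fin (p * m) → ℝ) → (Fin (p * m) → ℝ))
    (V : (Fin (p * m) → ℝ) → (Fin (p * (n - 1)) → ℝ))
    (hX : DifferentiableAt ℝ X b₀) (hV : DifferentiableAt ℝ V b₀)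
    (hX0 : X b₀ = x) (hV0 : V b₀ = v)
    (heq : ∀ᶠ b in nhds b₀,
      s = E *ᵥ X b ∧
      ∀ k, X b k = Real.exp (lam⁻¹ * ((Eᵀ *ᵥ V b) k - b k - (C *ᵥ X b) k) - 1))
    (D : Matrix (Fin (p * m)) (Fin (p * m)) ℝ) (hD : D = Matrix.diagonal x)
    (J : Matrix (Fin (p * m) ⊕ Fin (p * (n - 1)))
        (Fin (p * m) ⊕ Fin (p * (n - 1))) ℝ)
    (hJ : J = Matrix.fromBlocks
      (1 + lam⁻¹ • (D * C)) (-(lam⁻¹ • (D * Eᵀ))) (-E) 0)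
    (hJns : IsUnit J.det)
    (gψ : Fin (p * m) → ℝ)
    (hgψ : gψ = fun j => fderiv ℝ ψ x (Pi.single j 1)) :
    ∀ k, fderiv ℝ (fun b => ψ (X b)) b₀ (Pi.single k 1) =
      (-(lam⁻¹) • (Dᵀ *ᵥ fun i => ((J⁻¹)ᵀ *ᵥ Sum.elim gψ 0) (Sum.inl i))) k := by
  intro k
  have hXd := hX.hasFDerivAt
  have hVd := hV.hasFDerivAt
  set L := fderiv ℝ X b₀ with hL
  set M := fderiv ℝ V b₀ with hM
  set u : Fin (p * m) → ℝ := Pi.single k 1 with hu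
  set dX : Fin (p * m) → ℝ := L u with hdX
  set dV : Fin (p * (n - 1)) → ℝ := M u with hdV
  -- continuous linear maps for matrix-vector multiplication
  let TE : (Fin (p * m) → ℝ) →L[ℝ] (Fin (p * (n - 1)) → ℝ) :=
    LinearMap.toContinuousLinearMap (Matrix.mulVecLin E)
  let TEt : (Fin (p * (n - 1)) → ℝ) →L[ℝ] (Fin (p * m) → ℝ) :=
    LinearMap.toContinuousLinearMap (Matrix.mulVecLin Eᵀ)
  let TC : (Fin (p * m) → ℝ) →L[ℝ] (Fin (p * m) → ℝ) :=
    LinearMap.toContinuousLinearMap (Matrix.mulVecLin C)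
  have hTE : ∀ w, TE w = E *ᵥ w := fun w => rfl
  have hTEt : ∀ w, TEt w = Eᵀ *ᵥ w := fun w => rfl
  have hTC : ∀ w, TC w = C *ᵥ w := fun w => rfl
  -- Claim A : E *ᵥ dX = 0
  have hA : E *ᵥ dX = 0 := by
    have h1 : HasFDerivAt (fun b => E *ᵥ X b) (TE.comp L) b₀ :=
      (TE.hasFDerivAt).comp b₀ hXd
    have h2 : (fun b => E *ᵥ X b) =ᶠ[nhds b₀] (fun _ => s) :=
      heq.mono fun b hb => hb.1.symm
    have h3 : fderiv ℝ (fun b => E *ᵥ X b) b₀ = 0 := by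
      rw [h2.fderiv_eq, fderiv_fun_const]; rfl
    have h4 : TE.comp L = 0 := by rw [← h1.fderiv, h3]
    have h5 : TE dX = 0 := by
      have := congrArg (fun (T : (Fin (p*m) → ℝ) →L[ℝ] (Fin (p*(n-1)) → ℝ)) => T u) h4
      simpa using this
    rw [← hTE]; exact h5
  -- Claim B : componentwise equation for dX
  have hB : ∀ j, dX j = x j * (lam⁻¹ * ((Eᵀ *ᵥ dV) j - u j - (C *ᵥ dX) j)) := by
    intro j
    have h1 : HasFDerivAt (fun b => (Eᵀ *ᵥ V b) j)
        ((ContinuousLinearMap.proj j).comp (TEt.comp M)) b₀ :=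
      ((ContinuousLinearMap.proj j).comp TEt).hasFDerivAt.comp b₀ hVd
    have h2 : HasFDerivAt (fun b : Fin (p * m) → ℝ => b j)
        (ContinuousLinearMap.proj (R := ℝ) (φ := fun _ : Fin (p * m) => ℝ) j) b₀ := by
      have := (ContinuousLinearMap.proj (R := ℝ)
        (φ := fun _ : Fin (p * m) => ℝ) j).hasFDerivAt (x := b₀)
      exact this
    have h3 : HasFDerivAt (fun b => (C *ᵥ X b) j)
        ((ContinuousLinearMap.proj j).comp (TC.comp L)) b₀ :=
      ((ContinuousLinearMap.proj j).comp TC).hasFDerivAt.comp b₀ hXd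
    have hg : HasFDerivAt
        (fun b => lam⁻¹ * ((Eᵀ *ᵥ V b) j - b j - (C *ᵥ X b) j) - 1)
        (lam⁻¹ • (((ContinuousLinearMap.proj j).comp (TEt.comp M))
          - ContinuousLinearMap.proj j
          - ((ContinuousLinearMap.proj j).comp (TC.comp L)))) b₀ :=
      (((h1.sub h2).sub h3).const_mul lam⁻¹).sub_const 1
    have hexp := hg.exp
    have hev : (fun b => X b j) =ᶠ[nhds b₀]
        (fun b => Real.exp (lam⁻¹ * ((Eᵀ *ᵥ V b) j - b j - (C *ᵥ X b) j) - 1)) :=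
      heq.mono fun b hb => hb.2 j
    have hXj : HasFDerivAt (fun b => X b j) ((ContinuousLinearMap.proj j).comp L) b₀ := by
      have := ((ContinuousLinearMap.proj (R := ℝ)
        (φ := fun _ : Fin (p * m) => ℝ) j).hasFDerivAt).comp b₀ hXd
      exact this
    have huniq := hXj.unique (hexp.congr_of_eventuallyEq hev)
    have happ := congrArg
      (fun (T : (Fin (p * m) → ℝ) →L[ℝ] ℝ) => T u) huniq
    simp only [ContinuousLinearMap.comp_apply, ContinuousLinearMap.smul_apply,
      ContinuousLinearMap.sub_apply, ContinuousLinearMap.proj_apply,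
      smul_eq_mul] at happ
    have hx0 : Real.exp (lam⁻¹ * ((Eᵀ *ᵥ V b₀) j - b₀ j - (C *ᵥ X b₀) j) - 1) = x j := by
      rw [← heq.self_of_nhds.2 j, hX0]
    rw [hx0] at happ
    calc dX j = L u j := rfl
      _ = x j * (lam⁻¹ * (TEt (M u) j - u j - TC (L u) j)) := happ
      _ = x j * (lam⁻¹ * ((Eᵀ *ᵥ dV) j - u j - (C *ᵥ dX) j)) := by
          rw [hTEt, hTC]
  -- the linear system
  set r : (Fin (p * m) ⊕ Fin (p * (n - 1))) → ℝ :=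
    Sum.elim (-(lam⁻¹) • (D *ᵥ u)) 0 with hr
  have hJy : J *ᵥ Sum.elim dX dV = r := by
    rw [hJ, Matrix.fromBlocks_mulVec]
    funext q
    cases q with
    | inl j =>
      have hb := hB j
      simp only [Sum.elim_inl, hr, Pi.add_apply, Matrix.add_mulVec,
        Matrix.one_mulVec, Matrix.neg_mulVec, Matrix.smul_mulVec,
        Pi.neg_apply, Pi.smul_apply, smul_eq_mul, hD, ← Matrix.mulVec_mulVec]
      have hdiag : ∀ (w : Fin (p * m) → ℝ) i,
          (Matrix.diagonal x *ᵥ w) i = x i * w i := by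
        intro w i
        simp [Matrix.mulVec, Matrix.diagonal, dotProduct,
          Finset.sum_ite_eq, ite_mul]
      rw [hdiag, hdiag, hdiag]
      have : (Sum.elim dX dV ∘ Sum.inl) = dX := rfl
      rw [this]
      have : (Sum.elim dX dV ∘ Sum.inr) = dV := rfl
      rw [this]
      have hlam' : lam⁻¹ ≠ 0 := inv_ne_zero hlam.ne'
      nlinarith [hb]
    | inr i =>
      simp only [Sum.elim_inr, hr, Pi.add_apply, Matrix.neg_mulVec,
        Matrix.zero_mulVec, Pi.neg_apply, Pi.zero_apply, add_zero]
      have : (Sum.elim dX dV ∘ Sum.inl) = dX := rfl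
      rw [this]
      rw [hA]
      simp
  have hsol : Sum.elim dX dV = J⁻¹ *ᵥ r := by
    rw [← hJy, Matrix.mulVec_mulVec, Matrix.nonsing_inv_mul J hJns, Matrix.one_mulVec]
  have hdXj : ∀ j, dX j = (J⁻¹ *ᵥ r) (Sum.inl j) := fun j =>
    (congrFun hsol (Sum.inl j) : _)
  -- chain rule
  have hψ' : DifferentiableAt ℝ ψ (X b₀) := by rw [hX0]; exact hψ
  have hcomp : fderiv ℝ (fun b => ψ (X b)) b₀ u = fderiv ℝ ψ x dX := by
    have hc := fderiv_comp b₀ hψ' hX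
    have : (fun b => ψ (X b)) = ψ ∘ X := rfl
    rw [this, hc, ContinuousLinearMap.comp_apply, hX0]
  have hlin : fderiv ℝ ψ x dX = ∑ j, dX j * gψ j := by
    have hrep : dX = ∑ j, dX j • (Pi.single j 1 : Fin (p * m) → ℝ) := by
      have := Finset.univ_sum_single dX
      rw [← this]
      congr 1
      funext j
      rw [← Pi.single_smul]
      norm_num
    conv_lhs => rw [hrep]
    rw [map_sum]
    simp [hgψ, smul_eq_mul]
  rw [hcomp, hlin]
  -- final dot-product manipulation
  have key1 : ∑ j, dX j * gψ j = (Sum.elim gψ 0) ⬝ᵥ (J⁻¹ *ᵥ r) := by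
    rw [dotProduct, Fintype.sum_sum_type]
    simp only [Sum.elim_inl, Sum.elim_inr, Pi.zero_apply, zero_mul,
      Finset.sum_const_zero, add_zero]
    exact Finset.sum_congr rfl fun j _ => by rw [hdXj j]; ring
  have key2 : (Sum.elim gψ 0) ⬝ᵥ (J⁻¹ *ᵥ r) = ((J⁻¹)ᵀ *ᵥ Sum.elim gψ 0) ⬝ᵥ r := by
    rw [Matrix.dotProduct_mulVec, Matrix.mulVec_transpose]
  rw [key1, key2]
  set w := (J⁻¹)ᵀ *ᵥ Sum.elim gψ 0 with hw
  rw [dotProduct, Fintype.sum_sum_type]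
  simp only [hr, Sum.elim_inl, Sum.elim_inr, mul_zero, Finset.sum_const_zero,
    add_zero, Pi.smul_apply, smul_eq_mul, Matrix.mulVec, dotProduct,
    Matrix.transpose_apply, neg_mul]
  simp only [Pi.zero_apply, mul_zero, Finset.sum_const_zero, add_zero]
  rw [Finset.mul_sum, ← Finset.sum_neg_distrib]
  apply Finset.sum_congr rfl
  intro i _
  have hui : ∑ t, D i t * u t = D i k := by
    simp [hu, Pi.single_apply, mul_ite, Finset.sum_ite_eq]
  rw [hui]
  ring
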